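/- APAL is strictly more expressive than epistemic logic (and than PAL) for at least two agents: for distinct agents a, b and atom p, there is no epistemic formula φ ∈ L_EL such that for every pointed epistemic model M_s, M_s ⊨ φ if and only if M_s ⊨ ◊(K_a p ∧ ¬K_b K_a p). -/

import Mathlib

/-- An epistemic (S5) model. -/
structure EpiModel (A P : Type) where
  S : Type
  ne : Nonempty S
  rel : A → S → S → Prop
  equiv : ∀ a, Equivalence (rel a)
  val : P → Set S

/-- The language L_EL of epistemic logic. -/
inductive ELForm (A P : Type) where
  | atom : P → ELForm A P
  | neg : ELForm A P → ELForm A P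
  | and : ELForm A P → ELForm A P → ELForm A P
  | know : A → ELForm A P → ELForm A P

/-- Satisfaction of epistemic formulas, relativized to a current domain `D`
(representing the submodel of `M` induced by `D`). -/
def ELForm.sat {A P : Type} (M : EpiModel A P) : ELForm A P → Set M.S → M.S → Prop
  | .atom p, _, s => s ∈ M.val p
  | .neg φ, D, s => ¬ ELForm.sat M φ D s
  | .and φ ψ, D, s => ELForm.sat M φ D s ∧ ELForm.sat M ψ D s
  | .know a φ, D, s => ∀ t, M.rel a s t → t ∈ D → ELForm.sat M φ D t

/-- The language L_APAL : atoms, ¬, ∧, K_a, announcements [ψ]φ and the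
arbitrary-announcement quantifier □ (quantifying over L_EL). -/
inductive Form (A P : Type) where
  | atom : P → Form A P
  | neg : Form A P → Form A P
  | and : Form A P → Form A P → Form A P
  | know : A → Form A P → Form A P
  | ann : Form A P → Form A P → Form A P
  | abox : Form A P → Form A P

/-- Satisfaction for L_APAL, relativized to a current domain `D`. -/
def Form.sat {A P : Type} (M : EpiModel A P) : Form A P → Set M.S → M.S → Prop
  | .atom p, _, s => s ∈ M.val p
  | .neg φ, D, s => ¬ Form.sat M φ D s
  | .and φ ψ, D, s => Form.sat M φ D s ∧ Form.sat M ψ D s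
  | .know a φ, D, s => ∀ t, M.rel a s t → t ∈ D → Form.sat M φ D t
  | .ann ψ φ, D, s => Form.sat M ψ D s → Form.sat M φ {t | t ∈ D ∧ Form.sat M ψ D t} s
  | .abox φ, D, s => ∀ χ : ELForm A P, ELForm.sat M χ D s →
      Form.sat M φ {t | t ∈ D ∧ ELForm.sat M χ D t} s

/-- Truth at a pointed model `M_s`. -/
def Sat {A P : Type} (M : EpiModel A P) (s : M.S) (φ : Form A P) : Prop :=
  Form.sat M φ Set.univ s

def Form.adia {A P : Type} (φ : Form A P) : Form A P := .neg (.abox (.neg φ))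

/-- Truth of an epistemic formula at a pointed model. -/
def ELSat {A P : Type} (M : EpiModel A P) (s : M.S) (φ : ELForm A P) : Prop :=
  ELForm.sat M φ Set.univ s


namespace ApalAux

/-- Atoms occurring in an epistemic formula. -/
def elAtoms {A P : Type} : ELForm A P → List P
  | .atom r => [r]
  | .neg φ => elAtoms φ
  | .and φ ψ => elAtoms φ ++ elAtoms ψ
  | .know _ φ => elAtoms φ

open Classical in
/-- Key function determining the equivalence relations. -/
noncomputable def keyf {A : Type} (a b : A) (c : A) (x : Fin 4) : ℕ :=
  if c = a then x.val % 2 else if c = b then x.val / 2 else x.val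

/-- The four-state model, parametrized by a valuation. -/
@[reducible] noncomputable def Mdl {A P : Type} (a b : A) (v : P → Set (Fin 4)) : EpiModel A P where
  S := Fin 4
  ne := ⟨0⟩
  rel c x y := keyf a b c x = keyf a b c y
  equiv _ := ⟨fun _ => rfl, Eq.symm, Eq.trans⟩
  val := v

/-- The automorphism (0 1)(2 3). -/
def hh : Fin 4 → Fin 4 := ![1, 0, 3, 2]

lemma hh_inv : ∀ x, hh (hh x) = x := by decide

lemma keyf_hh {A : Type} (a b c : A) (x y : Fin 4) :
    keyf a b c (hh x) = keyf a b c (hh y) ↔ keyf a b c x = keyf a b c y := by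
  unfold keyf
  split_ifs <;> revert x y <;> decide

/-- Truth of EL formulas is invariant under the automorphism `hh`,
provided the valuation and the domain are `hh`-closed. -/
lemma sat_hh {A P : Type} (a b : A) (v : P → Set (Fin 4))
    (hv : ∀ r x, x ∈ v r ↔ hh x ∈ v r) (χ : ELForm A P) (D : Set (Fin 4))
    (hD : ∀ x, x ∈ D ↔ hh x ∈ D) :
    ∀ s, ELForm.sat (Mdl a b v) χ D s ↔ ELForm.sat (Mdl a b v) χ D (hh s) := by
  induction χ with
  | atom r => exact fun s => hv r s
  | neg φ ih => exact fun s => not_congr (ih s)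
  | and φ ψ ih1 ih2 => exact fun s => and_congr (ih1 s) (ih2 s)
  | know c φ ih =>
    have key : ∀ s, ELForm.sat (Mdl a b v) (.know c φ) D s →
        ELForm.sat (Mdl a b v) (.know c φ) D (hh s) := by
      intro s hs t hrel htD
      have hrel' : keyf a b c s = keyf a b c (hh t) := by
        apply (keyf_hh a b c s (hh t)).mp
        rw [hh_inv]; exact hrel
      exact (ih t).mpr (hs (hh t) hrel' ((hD t).mp htD))
    intro s
    refine ⟨key s, fun hs => ?_⟩
    have := key (hh s) hs
    rwa [hh_inv] at this

/-- Truth of EL formulas depends only on the valuation of the atoms occurring. -/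
lemma sat_val_congr {A P : Type} (a b : A) (v1 v2 : P → Set (Fin 4)) (χ : ELForm A P) :
    ∀ (D : Set (Fin 4)) (s : Fin 4), (∀ r ∈ elAtoms χ, v1 r = v2 r) →
      (ELForm.sat (Mdl a b v1) χ D s ↔ ELForm.sat (Mdl a b v2) χ D s) := by
  induction χ with
  | atom r =>
    intro D s hv
    show s ∈ v1 r ↔ s ∈ v2 r
    rw [hv r (by simp [elAtoms])]
  | neg φ ih => exact fun D s hv => not_congr (ih D s hv)
  | and φ ψ ih1 ih2 =>
    intro D s hv
    exact and_congr
      (ih1 D s fun r hr => hv r (by simp [elAtoms, hr]))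
      (ih2 D s fun r hr => hv r (by simp [elAtoms, hr]))
  | know c φ ih =>
    intro D s hv
    exact forall_congr' fun t => imp_congr Iff.rfl (imp_congr Iff.rfl (ih D t hv))

/-- Valuation for the model where the diamond fails. -/
def v1 {P : Type} (p : P) : P → Set (Fin 4) := fun r => {x | r = p ∧ x.val < 2}

/-- Valuation for the model where the diamond holds (q breaks the symmetry). -/
def v2 {P : Type} (p q : P) : P → Set (Fin 4) :=
  fun r => {x | (r = p ∧ x.val < 2) ∨ (r = q ∧ x.val ≠ 2)}

lemma hhlt : ∀ x : Fin 4, (hh x).val < 2 ↔ x.val < 2 := by decide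

lemma hv1 {P : Type} (p : P) : ∀ (r : P) (x : Fin 4), x ∈ v1 p r ↔ hh x ∈ v1 p r :=
  fun r x => and_congr Iff.rfl (hhlt x).symm

end ApalAux

/-- APAL is strictly more expressive than epistemic logic
(hence than PAL) for at least two agents: no epistemic formula is equivalent,
on all pointed epistemic models, to `◊(K_a p ∧ ¬K_b K_a p)`. -/
theorem apal_more_expressive_than_el
    (A P : Type) [Countable A] [Countable P] [Infinite P]
    (a b : A) (hab : a ≠ b) (p : P) :
    ¬ ∃ φ : ELForm A P, ∀ (M : EpiModel A P) (s : M.S),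
        ELSat M s φ ↔
          Sat M s (Form.adia (.and (.know a (.atom p))
            (.neg (.know b (.know a (.atom p)))))) := by
  rintro ⟨φ, hφ⟩
  obtain ⟨q, hq⟩ : ∃ q, q ∉ (p :: ApalAux.elAtoms φ) := by
    have hfin : {x | x ∈ (p :: ApalAux.elAtoms φ)}.Finite :=
      (p :: ApalAux.elAtoms φ).finite_toSet
    obtain ⟨q, hq⟩ := hfin.infinite_compl.nonempty
    exact ⟨q, hq⟩
  have hqp : q ≠ p := by rintro rfl; exact hq List.mem_cons_self
  have hqφ : q ∉ ApalAux.elAtoms φ := fun h => hq (List.mem_cons_of_mem _ h)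
  have ka : ∀ x y : Fin 4,
      ApalAux.keyf a b a x = ApalAux.keyf a b a y ↔ x.val % 2 = y.val % 2 := by
    intro x y; simp [ApalAux.keyf]
  have kb : ∀ x y : Fin 4,
      ApalAux.keyf a b b x = ApalAux.keyf a b b y ↔ x.val / 2 = y.val / 2 := by
    intro x y; simp [ApalAux.keyf, Ne.symm hab]
  -- The diamond fails at state 0 of the symmetric model M1.
  have hM1 : ¬ Sat (ApalAux.Mdl a b (ApalAux.v1 p)) (0 : Fin 4)
      (Form.adia (.and (.know a (.atom p)) (.neg (.know b (.know a (.atom p)))))) := by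
    intro hs
    simp only [Sat, Form.adia, Form.sat] at hs
    push_neg at hs
    obtain ⟨χ, hχ0, hψ⟩ := hs
    set D : Set (Fin 4) :=
      {t | t ∈ Set.univ ∧ ELForm.sat (ApalAux.Mdl a b (ApalAux.v1 p)) χ Set.univ t} with hDdef
    have hDcl : ∀ x, x ∈ D ↔ ApalAux.hh x ∈ D := fun x =>
      and_congr Iff.rfl
        (ApalAux.sat_hh a b (ApalAux.v1 p) (ApalAux.hv1 p) χ Set.univ (fun _ => Iff.rfl) x)
    obtain ⟨hKa, hn⟩ := hψ
    have h2 : (2 : Fin 4) ∉ D := by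
      intro h2
      have := hKa 2 ((ka 0 2).mpr rfl) h2
      exact absurd this.2 (by decide)
    obtain ⟨t, hbt, htD, u, hau, huD, hup⟩ := hn
    have hu2 : ¬ u.val < 2 := fun h => hup ⟨rfl, h⟩
    fin_cases u
    · exact hu2 (by decide)
    · exact hu2 (by decide)
    · exact h2 huD
    · have h32 : ApalAux.hh 3 = 2 := by decide
      exact h2 (h32 ▸ (hDcl 3).mp huD)
  -- The diamond holds at state 0 of M2: announce q.
  have hM2 : Sat (ApalAux.Mdl a b (ApalAux.v2 p q)) (0 : Fin 4)
      (Form.adia (.and (.know a (.atom p)) (.neg (.know b (.know a (.atom p)))))) := by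
    intro hall
    refine hall (.atom q) (Or.inr ⟨rfl, by decide⟩) ⟨?_, ?_⟩
    · -- K_a p after announcing q
      intro t hr ht
      have hr' : (0 : ℕ) = t.val % 2 := (ka 0 t).mp hr
      have ht2 : t.val ≠ 2 := by
        rcases ht.2 with ⟨hpq, _⟩ | ⟨_, h⟩
        · exact absurd hpq hqp
        · exact h
      have := t.isLt
      exact Or.inl ⟨rfl, by omega⟩
    · -- ¬ K_b K_a p after announcing q
      intro H
      have e1 : ApalAux.keyf a b b (0 : Fin 4) = ApalAux.keyf a b b 1 :=
        (kb 0 1).mpr (by decide)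
      have e2 : ApalAux.keyf a b a (1 : Fin 4) = ApalAux.keyf a b a 3 :=
        (ka 1 3).mpr (by decide)
      have m1 : ((1 : Fin 4)) ∈ ApalAux.v2 p q q := Or.inr ⟨rfl, by decide⟩
      have m3 : ((3 : Fin 4)) ∈ ApalAux.v2 p q q := Or.inr ⟨rfl, by decide⟩
      have h3 := H 1 e1 ⟨trivial, m1⟩ 3 e2 ⟨trivial, m3⟩
      have h32 : ¬ ((3 : Fin 4)).val < 2 := by decide
      rcases h3 with ⟨_, h⟩ | ⟨hpq, _⟩
      · exact absurd h h32
      · exact absurd hpq.symm hqp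
  -- φ cannot see the difference between M1 and M2.
  have hagree : ELSat (ApalAux.Mdl a b (ApalAux.v1 p)) (0 : Fin 4) φ ↔
      ELSat (ApalAux.Mdl a b (ApalAux.v2 p q)) (0 : Fin 4) φ := by
    refine ApalAux.sat_val_congr a b _ _ φ Set.univ 0 fun r hr => ?_
    ext x
    constructor
    · exact fun h => Or.inl h
    · rintro (h | ⟨hrq, _⟩)
      · exact h
      · exact absurd (hrq ▸ hr) hqφ
  have h1 := hφ (ApalAux.Mdl a b (ApalAux.v1 p)) (0 : Fin 4)
  have h2 := hφ (ApalAux.Mdl a b (ApalAux.v2 p q)) (0 : Fin 4)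
  exact hM1 (h1.mp (hagree.mpr (h2.mpr hM2)))
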